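/- arXiv:2510.06490 — 6 statements merged into one kernel-verified Lean document; each statement's English description precedes it below -/
import Mathlib

section
/- Let Θ̃ be the unique positive solution of ∑_{j=1}^m σ_j²/(Θ̃ + k σ_j²) = 1 where σ_1 ≥ ... ≥ σ_m > 0 and 0 < k < m. Then Θ̃ ≥ ∑_{j=k+1}^m σ_j². -/
/-- Lower bound: the unique positive solution Θ̃ of ∑ σ_j²/(Θ̃ + k σ_j²) = 1
satisfies Θ̃ ≥ ∑_{j>k} σ_j², where σ is nonincreasing. -/
theorem rsvd_error_lower_bound (m k : ℕ) (hk : 0 < k) (hkm : k < m)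
    (σ : Fin m → ℝ) (hσ : ∀ j, 0 < σ j) (hmono : Antitone σ)
    (Θ : ℝ) (hΘ : 0 < Θ)
    (heq : ∑ j : Fin m, σ j ^ 2 / (Θ + (k : ℝ) * σ j ^ 2) = 1) :
    (∑ j ∈ Finset.univ.filter (fun j : Fin m => k ≤ (j : ℕ)), σ j ^ 2) ≤ Θ := by
  classical
  set c : ℝ := σ ⟨k, hkm⟩ with hc
  have hcpos : 0 < c := hσ _
  set D : ℝ := Θ + (k : ℝ) * c ^ 2 with hD
  have hDpos : 0 < D := by positivity
  set T : ℝ := ∑ j ∈ Finset.univ.filter (fun j : Fin m => k ≤ (j : ℕ)), σ j ^ 2 with hT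
  have hdenpos : ∀ j : Fin m, 0 < Θ + (k : ℝ) * σ j ^ 2 := by
    intro j; have := hσ j; positivity
  -- tail bound
  have h2 : T / D ≤ ∑ j ∈ Finset.univ.filter (fun j : Fin m => k ≤ (j : ℕ)),
      σ j ^ 2 / (Θ + (k : ℝ) * σ j ^ 2) := by
    rw [hT, Finset.sum_div]
    apply Finset.sum_le_sum
    intro j hj
    have hjk : k ≤ (j : ℕ) := (Finset.mem_filter.mp hj).2
    have hle : σ j ≤ c := hmono (by simp [Fin.le_def]; omega)
    have hden : Θ + (k : ℝ) * σ j ^ 2 ≤ D := by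
      have : σ j ^ 2 ≤ c ^ 2 := by nlinarith [hσ j]
      have hk0 : (0:ℝ) ≤ (k:ℝ) := by positivity
      nlinarith
    exact div_le_div_of_nonneg_left (sq_nonneg _) (hdenpos j) hden
  -- head bound
  have hcard : (Finset.univ.filter (fun j : Fin m => ¬ k ≤ (j : ℕ))).card = k := by
    have : (Finset.univ.filter (fun j : Fin m => ¬ k ≤ (j : ℕ))) = Finset.Iio ⟨k, hkm⟩ := by
      ext j
      simp only [Finset.mem_filter, Finset.mem_univ, true_and, Finset.mem_Iio, Fin.lt_def]
      omega
    rw [this, Fin.card_Iio]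
  have h1 : (k : ℝ) * (c ^ 2 / D) ≤ ∑ j ∈ Finset.univ.filter (fun j : Fin m => ¬ k ≤ (j : ℕ)),
      σ j ^ 2 / (Θ + (k : ℝ) * σ j ^ 2) := by
    have := Finset.sum_le_sum (f := fun _ : Fin m => c ^ 2 / D)
      (g := fun j : Fin m => σ j ^ 2 / (Θ + (k : ℝ) * σ j ^ 2))
      (s := Finset.univ.filter (fun j : Fin m => ¬ k ≤ (j : ℕ))) ?_
    · simp only [Finset.sum_const, hcard, nsmul_eq_mul] at this
      exact this
    · intro j hj
      have hjk : (j : ℕ) < k := by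
        have := (Finset.mem_filter.mp hj).2; omega
      have hge : c ≤ σ j := hmono (by simp [Fin.le_def]; omega)
      rw [div_le_div_iff₀ hDpos (hdenpos j), hD]
      have hsq : c ^ 2 ≤ σ j ^ 2 := pow_le_pow_left₀ hcpos.le hge 2
      nlinarith [mul_le_mul_of_nonneg_left hsq hΘ.le]
  have hsplit := Finset.sum_filter_add_sum_filter_not Finset.univ
    (fun j : Fin m => k ≤ (j : ℕ)) (fun j : Fin m => σ j ^ 2 / (Θ + (k : ℝ) * σ j ^ 2))
  rw [heq] at hsplit
  have hkey : (k : ℝ) * (c ^ 2 / D) + T / D ≤ 1 := by linarith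
  have : ((k : ℝ) * c ^ 2 + T) / D ≤ 1 := by
    rw [add_div, mul_div_assoc]; exact hkey
  rw [div_le_one hDpos] at this
  linarith
end

section
/- Let σ_1 ≥ ... ≥ σ_m > 0, integers 0 ≤ r < k < m, C := (m−k)k/((m−r)(k−r)), and let Θ̃ > 0 solve ∑_{j=1}^m σ_j²/(Θ̃ + k σ_j²) = 1. Then Θ̃ ≤ C · ∑_{j=r+1}^m σ_j². -/
lemma card_filter_le_fin (m r : ℕ) :
    (Finset.univ.filter (fun j : Fin m => r ≤ (j : ℕ))).card = m - r := by
  rw [Finset.card_filter, Fin.sum_univ_eq_sum_range (fun i => if r ≤ i then 1 else 0),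
    ← Finset.sum_filter]
  have : (Finset.range m).filter (fun a => r ≤ a) = Finset.Ico r m := by
    ext a; simp [Finset.mem_Ico, and_comm]
  rw [this]; simp

lemma tangent_bound (A k x s : ℝ) (hA : 0 < A) (hk : 0 < k) (hx : 0 < x) (hs : 0 < s) :
    x / (A + k * x) ≤ s / (A + k * s) + A * (x - s) / (A + k * s) ^ 2 := by
  have hAx : 0 < A + k * x := by positivity
  have hAs : 0 < A + k * s := by positivity
  rw [div_add_div _ _ (ne_of_gt hAs) (by positivity), div_le_div_iff₀ hAx (by positivity)]
  nlinarith [mul_nonneg (mul_nonneg hA.le hk.le) (sq_nonneg (s - x)), sq_nonneg (s - x)]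

/-- Upper bound: Θ̃ ≤ C ∑_{j>r} σ_j² with C = (m−k)k/((m−r)(k−r)). -/
theorem rsvd_error_upper_bound (m r k : ℕ) (hrk : r < k) (hkm : k < m)
    (σ : Fin m → ℝ) (hσ : ∀ j, 0 < σ j) (hmono : Antitone σ)
    (Θ : ℝ) (hΘ : 0 < Θ)
    (heq : ∑ j : Fin m, σ j ^ 2 / (Θ + (k : ℝ) * σ j ^ 2) = 1) :
    Θ ≤ (((m : ℝ) - k) * k / (((m : ℝ) - r) * ((k : ℝ) - r))) *
      ∑ j ∈ Finset.univ.filter (fun j : Fin m => r ≤ (j : ℕ)), σ j ^ 2 := by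
  classical
  have hrm : r < m := hrk.trans hkm
  have hkr : (0:ℝ) < (k:ℝ) - r := by
    have := (Nat.cast_lt (α := ℝ)).2 hrk; linarith
  have hmk : (0:ℝ) < (m:ℝ) - k := by
    have := (Nat.cast_lt (α := ℝ)).2 hkm; linarith
  have hmr : (0:ℝ) < (m:ℝ) - r := by linarith
  have hk0 : (0:ℝ) < (k:ℝ) := by
    have : (0:ℕ) < k := lt_of_le_of_lt (Nat.zero_le r) hrk
    exact_mod_cast this
  set S := Finset.univ.filter (fun j : Fin m => r ≤ (j : ℕ)) with hSdef
  set T := ∑ j ∈ S, σ j ^ 2 with hTdef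
  set C := (((m : ℝ) - k) * k / (((m : ℝ) - r) * ((k : ℝ) - r))) with hCdef
  have hCpos : 0 < C := div_pos (mul_pos hmk hk0) (mul_pos hmr hkr)
  have hSne : S.Nonempty := ⟨⟨r, hrm⟩, by simp [hSdef]⟩
  have hTpos : 0 < T := Finset.sum_pos (fun j _ => pow_pos (hσ j) 2) hSne
  set A := C * T with hAdef
  have hApos : 0 < A := mul_pos hCpos hTpos
  have hcard : (S.card : ℝ) = (m:ℝ) - r := by
    rw [hSdef, card_filter_le_fin]
    rw [Nat.cast_sub hrm.le]
  set s := T / ((m:ℝ) - r) with hsdef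
  have hspos : 0 < s := div_pos hTpos hmr
  have hAs : 0 < A + k * s := by positivity
  -- key: f(A) ≤ 1
  have key : ∑ j : Fin m, σ j ^ 2 / (A + (k : ℝ) * σ j ^ 2) ≤ 1 := by
    rw [← Finset.sum_filter_add_sum_filter_not Finset.univ (fun j : Fin m => r ≤ (j : ℕ))]
    have hb1 : ∑ j ∈ Finset.univ.filter (fun j : Fin m => ¬ r ≤ (j : ℕ)),
        σ j ^ 2 / (A + (k : ℝ) * σ j ^ 2) ≤ (r : ℝ) / k := by
      have hterm : ∀ j ∈ Finset.univ.filter (fun j : Fin m => ¬ r ≤ (j : ℕ)),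
          σ j ^ 2 / (A + (k : ℝ) * σ j ^ 2) ≤ 1 / k := by
        intro j _
        have h1 : 0 < (k:ℝ) * σ j ^ 2 := mul_pos hk0 (pow_pos (hσ j) 2)
        rw [div_le_div_iff₀ (add_pos hApos h1) hk0]
        nlinarith [pow_pos (hσ j) 2]
      calc ∑ j ∈ Finset.univ.filter (fun j : Fin m => ¬ r ≤ (j : ℕ)),
            σ j ^ 2 / (A + (k : ℝ) * σ j ^ 2)
          ≤ ∑ _j ∈ Finset.univ.filter (fun j : Fin m => ¬ r ≤ (j : ℕ)), 1 / (k:ℝ) :=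
            Finset.sum_le_sum hterm
        _ = ((Finset.univ.filter (fun j : Fin m => ¬ r ≤ (j : ℕ))).card : ℝ) * (1 / k) := by
            rw [Finset.sum_const, nsmul_eq_mul]
        _ ≤ (r : ℝ) * (1 / k) := by
            have : (Finset.univ.filter (fun j : Fin m => ¬ r ≤ (j : ℕ))).card ≤ r := by
              have hsub : ∀ j ∈ Finset.univ.filter (fun j : Fin m => ¬ r ≤ (j : ℕ)),
                  (fun j : Fin m => (j : ℕ)) j ∈ Finset.range r := by
                intro j hj
                have h3 := (Finset.mem_filter.1 hj).2
                simpa using Finset.mem_range.2 (by omega : (j:ℕ) < r)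
              simpa using Finset.card_le_card_of_injOn (fun j : Fin m => (j : ℕ)) hsub
                (fun a _ b _ hab => Fin.ext hab)
            have h2 : ((Finset.univ.filter (fun j : Fin m => ¬ r ≤ (j : ℕ))).card : ℝ) ≤ (r:ℝ) :=
              by exact_mod_cast this
            apply mul_le_mul_of_nonneg_right h2 (by positivity)
        _ = (r : ℝ) / k := by ring
    have hb2 : ∑ j ∈ S, σ j ^ 2 / (A + (k : ℝ) * σ j ^ 2)
        ≤ ((m:ℝ) - r) * (s / (A + k * s)) := by
      have htang : ∀ j ∈ S, σ j ^ 2 / (A + (k : ℝ) * σ j ^ 2) ≤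
          s / (A + k * s) + A * (σ j ^ 2 - s) / (A + k * s) ^ 2 :=
        fun j _ => tangent_bound A k (σ j ^ 2) s hApos hk0 (pow_pos (hσ j) 2) hspos
      calc ∑ j ∈ S, σ j ^ 2 / (A + (k : ℝ) * σ j ^ 2)
          ≤ ∑ j ∈ S, (s / (A + k * s) + A * (σ j ^ 2 - s) / (A + k * s) ^ 2) :=
            Finset.sum_le_sum htang
        _ = (S.card : ℝ) * (s / (A + k * s)) + A * (T - (S.card : ℝ) * s) / (A + k * s) ^ 2 := by
            rw [Finset.sum_add_distrib, Finset.sum_const, nsmul_eq_mul]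
            congr 1
            rw [← Finset.sum_div, ← Finset.mul_sum]
            congr 2
            rw [Finset.sum_sub_distrib, Finset.sum_const, nsmul_eq_mul, hTdef]
        _ = ((m:ℝ) - r) * (s / (A + k * s)) := by
            rw [hcard]
            have : ((m:ℝ) - r) * s = T := by
              rw [hsdef]; field_simp
            rw [this]
            simp
    have hfinal : (r : ℝ) / k + ((m:ℝ) - r) * (s / (A + k * s)) = 1 := by
      rw [hsdef, hAdef, hCdef]
      field_simp
      ring
    calc ∑ j ∈ S, σ j ^ 2 / (A + (k : ℝ) * σ j ^ 2)
          + ∑ j ∈ Finset.univ.filter (fun j : Fin m => ¬ r ≤ (j : ℕ)),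
            σ j ^ 2 / (A + (k : ℝ) * σ j ^ 2)
        ≤ ((m:ℝ) - r) * (s / (A + k * s)) + (r : ℝ) / k := add_le_add hb2 hb1
      _ = 1 := by rw [add_comm]; exact hfinal
  -- conclude Θ ≤ A by monotonicity
  by_contra hlt
  push_neg at hlt
  have hAT : A < Θ := hlt
  have hstrict : ∑ j : Fin m, σ j ^ 2 / (Θ + (k : ℝ) * σ j ^ 2) <
      ∑ j : Fin m, σ j ^ 2 / (A + (k : ℝ) * σ j ^ 2) := by
    apply Finset.sum_lt_sum_of_nonempty
    · exact ⟨⟨r, hrm⟩, Finset.mem_univ _⟩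
    · intro j _
      apply div_lt_div_of_pos_left (pow_pos (hσ j) 2) (by positivity)
      linarith
  rw [heq] at hstrict
  linarith
end

section
/- For any S > 0, integers 0 ≤ r < k < d, and nonnegative reals σ_{r+1},...,σ_d with ∑_{i=r+1}^d σ_i² = S, letting C = (d−k)k/((d−r)(k−r)) and θ* = k/(C·S), one has ∑_{i=r+1}^d 1/(1 + θ* σ_i²) ≥ d − k. -/
/-- Jensen step: for θ* = k/(C·S) with C = (d−k)k/((d−r)(k−r)) and
∑_{i>r} σ_i² = S, one has ∑_{i>r} 1/(1 + θ* σ_i²) ≥ d − k. -/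
theorem jensen_step (d r k : ℕ) (hrk : r < k) (hkd : k < d)
    (S : ℝ) (hS : 0 < S) (σ : Fin d → ℝ) (hσ : ∀ i, 0 ≤ σ i)
    (hsum : ∑ i ∈ Finset.univ.filter (fun i : Fin d => r ≤ (i : ℕ)), σ i ^ 2 = S) :
    ((d : ℝ) - k) ≤
      ∑ i ∈ Finset.univ.filter (fun i : Fin d => r ≤ (i : ℕ)),
        1 / (1 + ((k : ℝ) / ((((d : ℝ) - k) * k / (((d : ℝ) - r) * ((k : ℝ) - r))) * S))
          * σ i ^ 2) := by
  have hrd : r < d := hrk.trans hkd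
  set T := Finset.univ.filter (fun i : Fin d => r ≤ (i : ℕ)) with hT
  have hcard : T.card = d - r := by
    have : T = Finset.Ici (⟨r, hrd⟩ : Fin d) := by
      ext i; simp [hT, Fin.le_def]
    rw [this, Fin.card_Ici]
  -- real constants
  have hdk : (0:ℝ) < (d:ℝ) - k := by
    have : (k:ℝ) < d := by exact_mod_cast hkd
    linarith
  have hkr : (0:ℝ) < (k:ℝ) - r := by
    have : (r:ℝ) < k := by exact_mod_cast hrk
    linarith
  have hdr : (0:ℝ) < (d:ℝ) - r := by linarith
  have hk0 : (0:ℝ) < k := by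
    have : (0:ℝ) ≤ r := Nat.cast_nonneg r; linarith
  set θ : ℝ := (k : ℝ) / ((((d : ℝ) - k) * k / (((d : ℝ) - r) * ((k : ℝ) - r))) * S) with hθ
  have hθpos : 0 < θ := by
    apply div_pos hk0
    positivity
  set m : ℝ := S / ((d:ℝ) - r) with hm
  have hmpos : 0 < m := div_pos hS hdr
  have hden : 0 < 1 + θ * m := by positivity
  set a : ℝ := 1 / (1 + θ * m) with ha
  -- tangent line bound
  have key : ∀ i ∈ T, a - θ * a^2 * (σ i ^ 2 - m) ≤ 1 / (1 + θ * σ i ^ 2) := by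
    intro i _
    have hdx : 0 < 1 + θ * σ i ^ 2 := by positivity
    have e : 1 / (1 + θ * σ i ^ 2) - (a - θ * a^2 * (σ i ^ 2 - m))
        = (θ * (σ i ^ 2 - m))^2 * a^2 / (1 + θ * σ i ^ 2) := by
      rw [ha]; field_simp; ring
    nlinarith [sq_nonneg (θ * (σ i ^ 2 - m)), sq_nonneg a,
      div_nonneg (mul_nonneg (sq_nonneg (θ * (σ i ^ 2 - m))) (sq_nonneg a)) hdx.le]
  have hsum2 : ∑ i ∈ T, (a - θ * a^2 * (σ i ^ 2 - m)) ≤ ∑ i ∈ T, 1 / (1 + θ * σ i ^ 2) :=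
    Finset.sum_le_sum key
  have hlhs : ∑ i ∈ T, (a - θ * a^2 * (σ i ^ 2 - m)) = (d:ℝ) - k := by
    rw [Finset.sum_sub_distrib, Finset.sum_const, hcard]
    have h1 : ∑ i ∈ T, θ * a^2 * (σ i ^ 2 - m) = θ * a^2 * (S - (d - r : ℕ) * m) := by
      rw [← Finset.mul_sum, Finset.sum_sub_distrib, hsum, Finset.sum_const, hcard,
        nsmul_eq_mul]
    rw [h1]
    have hcast : ((d - r : ℕ) : ℝ) = (d:ℝ) - r := by
      rw [Nat.cast_sub hrd.le]
    rw [hcast, hm]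
    have h2 : (d:ℝ) - r ≠ 0 := hdr.ne'
    have hz : ((d:ℝ) - r) * (S / ((d:ℝ) - r)) = S := by field_simp
    rw [hz, sub_self, mul_zero, sub_zero, nsmul_eq_mul, hcast, ha, hm, hθ]
    rw [div_mul_div_comm]
    have hSne : S ≠ 0 := hS.ne'
    field_simp
    ring
  linarith
end

section
/- In the bilevel ensemble with a > b > 0, r < k < m, k = o(m), and a/b bounded, the closed-form error Θ̃ = ½[(r−k)a² + (m−r−k)b² + √(((r−k)a² + (m−r−k)b²)² + 4a²b²(m−k))] satisfies Θ̃ ≤ (m−k)b² + (k−r)a² · (m−k)b²/((m−r−k)b²+(k−r)a²) ≤ (m−k)b² + k a²; in particular Θ̃ / ((m−k)b²) → 1 as m → ∞ with k = o(m) and a/b = Θ(1). -/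
open Filter

set_option maxHeartbeats 1000000

lemma bilevel_key (a b : ℝ) (r k m : ℕ) (hb : 0 < b) (hab : b < a)
    (hrk : r < k) (hkm : 2 * k < m) (Θ : ℝ)
    (hΘ : Θ = (1 / 2) * ((((r : ℝ) - k) * a ^ 2 + ((m : ℝ) - r - k) * b ^ 2) +
      Real.sqrt ((((r : ℝ) - k) * a ^ 2 + ((m : ℝ) - r - k) * b ^ 2) ^ 2
        + 4 * a ^ 2 * b ^ 2 * ((m : ℝ) - k)))) :
    (Θ ≤ ((m : ℝ) - k) * b ^ 2 + ((k : ℝ) - r) * a ^ 2 * (((m : ℝ) - k) * b ^ 2)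
          / (((m : ℝ) - r - k) * b ^ 2 + ((k : ℝ) - r) * a ^ 2)) ∧
    (((m : ℝ) - k) * b ^ 2 + ((k : ℝ) - r) * a ^ 2 * (((m : ℝ) - k) * b ^ 2)
          / (((m : ℝ) - r - k) * b ^ 2 + ((k : ℝ) - r) * a ^ 2)
        ≤ ((m : ℝ) - k) * b ^ 2 + (k : ℝ) * a ^ 2) ∧
    (((m : ℝ) - k) * b ^ 2 - (k : ℝ) * a ^ 2 ≤ Θ) := by
  have ha : 0 < a := hb.trans hab
  have hb2 : (0:ℝ) < b ^ 2 := by positivity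
  have ha2 : (0:ℝ) < a ^ 2 := by positivity
  have hba2 : b ^ 2 < a ^ 2 := by nlinarith
  have hr1 : (r : ℝ) + 1 ≤ k := by exact_mod_cast Nat.succ_le_of_lt hrk
  have hk1 : 2 * (k : ℝ) + 1 ≤ m := by exact_mod_cast Nat.succ_le_of_lt hkm
  have hr0 : (0:ℝ) ≤ r := Nat.cast_nonneg r
  set ka : ℝ := (k : ℝ) * a ^ 2 with hka
  set p : ℝ := ((k : ℝ) - r) * a ^ 2 with hp
  set q : ℝ := ((m : ℝ) - r - k) * b ^ 2 with hq
  set M : ℝ := ((m : ℝ) - k) * b ^ 2 with hM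
  set S : ℝ := ((r : ℝ) - k) * a ^ 2 + ((m : ℝ) - r - k) * b ^ 2 with hS
  have hSqp : S = q - p := by rw [hS, hq, hp]; ring
  have hap : a ^ 2 ≤ p := by rw [hp]; nlinarith
  have hbq : b ^ 2 ≤ q := by rw [hq]; nlinarith
  have hqM : q ≤ M := by rw [hq, hM]; nlinarith
  have hMq : M = q + (r : ℝ) * b ^ 2 := by rw [hM, hq]; ring
  have hpka : (r : ℝ) * b ^ 2 + p ≤ ka := by rw [hp, hka]; nlinarith
  have hDM : 4 * a ^ 2 * b ^ 2 * ((m : ℝ) - k) = 4 * (a ^ 2 * M) := by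
    rw [hM]; ring
  have hΘ' : Θ = (1 / 2) * (S + Real.sqrt (S ^ 2 + 4 * (a ^ 2 * M))) := by
    rw [hΘ, hDM]
  clear_value ka p q M S
  clear hΘ hS hq hM hp hka
  have hq0 : 0 < q := lt_of_lt_of_le hb2 hbq
  have hM0 : 0 < M := lt_of_lt_of_le hq0 hqM
  have hp0 : 0 < p := lt_of_lt_of_le ha2 hap
  have hqp0 : 0 < q + p := by linarith
  set U : ℝ := M + p * M / (q + p) with hU
  have hdiv0 : 0 ≤ p * M / (q + p) := div_nonneg (mul_nonneg hp0.le hM0.le) hqp0.le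
  have hMU : M ≤ U := by rw [hU]; linarith
  have hUS : p ≤ U - S := by rw [hU, hSqp]; linarith
  clear_value U
  have key1 : a ^ 2 * M ≤ U * (U - S) := by
    nlinarith [mul_le_mul (hap.trans hUS) hMU hM0.le (le_trans ha2.le (hap.trans hUS))]
  -- Θ ≤ U
  have goal1 : Θ ≤ U := by
    have hsq : S ^ 2 + 4 * (a ^ 2 * M) ≤ (2 * U - S) ^ 2 := by nlinarith [key1]
    have h2US : 0 ≤ 2 * U - S := by
      have : S ≤ M := by rw [hSqp]; linarith
      linarith
    have hsqrt : Real.sqrt (S ^ 2 + 4 * (a ^ 2 * M)) ≤ 2 * U - S :=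
      le_of_le_of_eq (Real.sqrt_le_sqrt hsq) (Real.sqrt_sq h2US)
    rw [hΘ']; linarith
  -- U ≤ M + k a²
  have goal2 : U ≤ M + ka := by
    have hdle : p * M / (q + p) ≤ ka := by
      rw [div_le_iff₀ hqp0]
      nlinarith [mul_nonneg hr0 hb2.le, mul_nonneg (mul_nonneg hr0 hb2.le) hp0.le, mul_pos hq0 hp0, mul_nonneg (mul_nonneg hr0 hb2.le) hq0.le]
    rw [hU]; linarith
  -- lower bound
  have goal3 : M - ka ≤ Θ := by
    have habs : S ≤ Real.sqrt (S ^ 2 + 4 * (a ^ 2 * M)) := by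
      calc S ≤ |S| := le_abs_self S
        _ = Real.sqrt (S ^ 2) := (Real.sqrt_sq_eq_abs S).symm
        _ ≤ _ := Real.sqrt_le_sqrt (by nlinarith)
    have hSM : M - ka ≤ S := by rw [hSqp, hMq]; linarith
    rw [hΘ']; linarith
  exact ⟨goal1, goal2, goal3⟩

/-- Bilevel ensemble asymptotics: with r < k < m, k = o(m), a/b bounded above and below,
the closed-form error Θ̃ eventually satisfies the stated upper bounds, and
Θ̃/((m−k)b²) → 1. -/
theorem bilevel_asymptotics (m k r : ℕ → ℕ) (a b : ℕ → ℝ)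
    (hb : ∀ i, 0 < b i) (hab : ∀ i, b i < a i)
    (hrk : ∀ i, r i < k i) (hkm : ∀ i, k i < m i)
    (hm : Tendsto m atTop atTop)
    (hko : Tendsto (fun i => (k i : ℝ) / (m i : ℝ)) atTop (nhds 0))
    (hratio : ∃ c C : ℝ, 0 < c ∧ ∀ i, c ≤ a i / b i ∧ a i / b i ≤ C)
    (Θ : ℕ → ℝ)
    (hΘ : ∀ i, Θ i = (1 / 2) * ((((r i : ℝ) - k i) * (a i) ^ 2
        + ((m i : ℝ) - r i - k i) * (b i) ^ 2) +
      Real.sqrt ((((r i : ℝ) - k i) * (a i) ^ 2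
          + ((m i : ℝ) - r i - k i) * (b i) ^ 2) ^ 2
        + 4 * (a i) ^ 2 * (b i) ^ 2 * ((m i : ℝ) - k i)))) :
    (∀ᶠ i in atTop,
      Θ i ≤ ((m i : ℝ) - k i) * (b i) ^ 2
          + ((k i : ℝ) - r i) * (a i) ^ 2 * (((m i : ℝ) - k i) * (b i) ^ 2)
            / (((m i : ℝ) - r i - k i) * (b i) ^ 2 + ((k i : ℝ) - r i) * (a i) ^ 2) ∧
      ((m i : ℝ) - k i) * (b i) ^ 2
          + ((k i : ℝ) - r i) * (a i) ^ 2 * (((m i : ℝ) - k i) * (b i) ^ 2)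
            / (((m i : ℝ) - r i - k i) * (b i) ^ 2 + ((k i : ℝ) - r i) * (a i) ^ 2)
        ≤ ((m i : ℝ) - k i) * (b i) ^ 2 + (k i : ℝ) * (a i) ^ 2) ∧
    Tendsto (fun i => Θ i / (((m i : ℝ) - k i) * (b i) ^ 2)) atTop (nhds 1) := by
  obtain ⟨c, C, hc, hcC⟩ := hratio
  -- eventually 2k < m
  have h1 : ∀ᶠ i in atTop, (k i : ℝ) / (m i : ℝ) < 1 / 2 :=
    hko.eventually (gt_mem_nhds (by norm_num))
  have h2 : ∀ᶠ i in atTop, 1 ≤ m i := hm.eventually_ge_atTop 1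
  have hE : ∀ᶠ i in atTop, 2 * k i < m i := by
    filter_upwards [h1, h2] with i hi1 hi2
    have hm0 : (0:ℝ) < (m i : ℝ) := by exact_mod_cast hi2
    have : (k i : ℝ) < (1/2) * (m i : ℝ) := by
      rw [div_lt_iff₀ hm0] at hi1; linarith
    have h2k : 2 * (k i : ℝ) < (m i : ℝ) := by linarith
    exact_mod_cast h2k
  have hkey := fun i (hi : 2 * k i < m i) =>
    bilevel_key (a i) (b i) (r i) (k i) (m i) (hb i) (hab i) (hrk i) hi (Θ i) (hΘ i)
  constructor
  · filter_upwards [hE] with i hi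
    exact ⟨(hkey i hi).1, (hkey i hi).2.1⟩
  · -- the tendsto part
    have hC0 : 0 < C := lt_of_lt_of_le hc ((hcC 0).1.trans (hcC 0).2)
    -- a i ≤ C * b i
    have haCb : ∀ i, a i ≤ C * b i := fun i => by
      have := (div_le_iff₀ (hb i)).mp (hcC i).2
      linarith
    set g : ℕ → ℝ := fun i => C ^ 2 * ((k i : ℝ) / ((m i : ℝ) - k i)) with hgdef
    have hfrac : Tendsto (fun i => (k i : ℝ) / ((m i : ℝ) - k i)) atTop (nhds 0) := by
      have hden : Tendsto (fun i => 1 - (k i : ℝ) / (m i : ℝ)) atTop (nhds 1) := by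
        have := (tendsto_const_nhds : Tendsto (fun _ : ℕ => (1:ℝ)) atTop (nhds 1)).sub hko
        simpa using this
      have hdiv := hko.div hden one_ne_zero
      simp only [zero_div] at hdiv
      refine hdiv.congr' ?_
      filter_upwards [hE, h2] with i hi hi2
      have hm0 : ((m i : ℝ)) ≠ 0 := Nat.cast_ne_zero.mpr (by omega)
      have hmk : ((m i : ℝ)) - k i ≠ 0 := by
        have h2k : 2 * (k i : ℝ) < (m i : ℝ) := by exact_mod_cast hi
        have : (0:ℝ) < (m i : ℝ) - k i := by linarith [(Nat.cast_nonneg (k i) : (0:ℝ) ≤ (k i : ℝ))]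
        linarith
      show (k i : ℝ) / (m i : ℝ) / (1 - (k i : ℝ) / (m i : ℝ)) = (k i : ℝ) / ((m i : ℝ) - k i)
      field_simp
    have hg0 : Tendsto g atTop (nhds 0) := by
      have := (tendsto_const_nhds : Tendsto (fun _ : ℕ => C ^ 2) atTop (nhds (C ^ 2))).mul hfrac
      simpa using this
    have hlow : Tendsto (fun i => 1 - g i) atTop (nhds 1) := by
      have := (tendsto_const_nhds : Tendsto (fun _ : ℕ => (1:ℝ)) atTop (nhds 1)).sub hg0
      simpa using this
    have hupp : Tendsto (fun i => 1 + g i) atTop (nhds 1) := by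
      have := (tendsto_const_nhds : Tendsto (fun _ : ℕ => (1:ℝ)) atTop (nhds 1)).add hg0
      simpa using this
    refine tendsto_of_tendsto_of_tendsto_of_le_of_le' hlow hupp ?_ ?_
    · filter_upwards [hE] with i hi
      have H := hkey i hi
      have hk1 : 2 * (k i : ℝ) + 1 ≤ (m i : ℝ) := by exact_mod_cast Nat.succ_le_of_lt hi
      have hmk0 : (0:ℝ) < (m i : ℝ) - k i := by linarith [(Nat.cast_nonneg (k i) : (0:ℝ) ≤ (k i : ℝ))]
      have hM0 : (0:ℝ) < ((m i : ℝ) - k i) * (b i) ^ 2 := by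
        have := hb i; positivity
      have hgM : g i * (((m i : ℝ) - k i) * (b i) ^ 2) = C ^ 2 * (k i : ℝ) * (b i) ^ 2 := by
        rw [hgdef]
        field_simp
      have hka : (k i : ℝ) * (a i) ^ 2 ≤ C ^ 2 * (k i : ℝ) * (b i) ^ 2 := by
        have h1 : a i ≤ C * b i := haCb i
        have h2 : (0:ℝ) < a i := (hb i).trans (hab i)
        have h3 : a i ^ 2 ≤ C ^ 2 * b i ^ 2 := by nlinarith
        have h4 := mul_le_mul_of_nonneg_left h3 (Nat.cast_nonneg (k i) : (0:ℝ) ≤ (k i : ℝ))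
        nlinarith [h4]
      rw [le_div_iff₀ hM0]
      have hring : (1 - g i) * (((m i : ℝ) - k i) * (b i) ^ 2)
          = ((m i : ℝ) - k i) * (b i) ^ 2 - g i * (((m i : ℝ) - k i) * (b i) ^ 2) := by ring
      have hΘlow := H.2.2
      linarith
    · filter_upwards [hE] with i hi
      have H := hkey i hi
      have hk1 : 2 * (k i : ℝ) + 1 ≤ (m i : ℝ) := by exact_mod_cast Nat.succ_le_of_lt hi
      have hmk0 : (0:ℝ) < (m i : ℝ) - k i := by linarith [(Nat.cast_nonneg (k i) : (0:ℝ) ≤ (k i : ℝ))]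
      have hM0 : (0:ℝ) < ((m i : ℝ) - k i) * (b i) ^ 2 := by
        have := hb i; positivity
      have hgM : g i * (((m i : ℝ) - k i) * (b i) ^ 2) = C ^ 2 * (k i : ℝ) * (b i) ^ 2 := by
        rw [hgdef]
        field_simp
      have hka : (k i : ℝ) * (a i) ^ 2 ≤ C ^ 2 * (k i : ℝ) * (b i) ^ 2 := by
        have h1 : a i ≤ C * b i := haCb i
        have h2 : (0:ℝ) < a i := (hb i).trans (hab i)
        have h3 : a i ^ 2 ≤ C ^ 2 * b i ^ 2 := by nlinarith
        have h4 := mul_le_mul_of_nonneg_left h3 (Nat.cast_nonneg (k i) : (0:ℝ) ≤ (k i : ℝ))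
        nlinarith [h4]
      rw [div_le_iff₀ hM0]
      have hring : (1 + g i) * (((m i : ℝ) - k i) * (b i) ^ 2)
          = ((m i : ℝ) - k i) * (b i) ^ 2 + g i * (((m i : ℝ) - k i) * (b i) ^ 2) := by ring
      have hΘup := H.1.trans H.2.1
      linarith
end

section
/- For B* = R⁻¹QᵀA where AΩ = QR as in RSVD, ‖B*‖₂ ≤ ‖A‖₂ / (σ_min(A) σ_min(Ω)), where σ_min denotes the smallest singular value (assuming A has full rank m = min(n,d) restriction making σ_min(A) > 0 and Ω has full column rank). -/
open Matrix

/-- Euclidean norm of a finite-dimensional real vector. -/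
noncomputable def enorm' {α : Type*} [Fintype α] (v : α → ℝ) : ℝ :=
  Real.sqrt (∑ i, v i ^ 2)

/-- Spectral (ℓ₂ → ℓ₂ operator) norm of a matrix. -/
noncomputable def opNorm' {α β : Type*} [Fintype α] [Fintype β]
    (M : Matrix α β ℝ) : ℝ :=
  ⨆ x : {x : β → ℝ // enorm' x = 1}, enorm' (M.mulVec x)

/-- Smallest singular value of a matrix (as an infimum over the unit sphere). -/
noncomputable def sMin' {α β : Type*} [Fintype α] [Fintype β]
    (M : Matrix α β ℝ) : ℝ :=
  ⨅ x : {x : β → ℝ // enorm' x = 1}, enorm' (M.mulVec x)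

lemma enorm'_nonneg {α : Type*} [Fintype α] (v : α → ℝ) : 0 ≤ enorm' v :=
  Real.sqrt_nonneg _

lemma enorm'_sq {α : Type*} [Fintype α] (v : α → ℝ) : enorm' v ^ 2 = ∑ i, v i ^ 2 :=
  Real.sq_sqrt (by positivity)

lemma enorm'_eq_sqrt_dot {α : Type*} [Fintype α] (v : α → ℝ) :
    enorm' v = Real.sqrt (v ⬝ᵥ v) := by
  simp [enorm', dotProduct, sq]

lemma enorm'_smul {α : Type*} [Fintype α] (c : ℝ) (v : α → ℝ) :
    enorm' (c • v) = |c| * enorm' v := by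
  unfold enorm'
  have h : ∑ i, (c • v) i ^ 2 = c ^ 2 * ∑ i, v i ^ 2 := by
    simp [mul_pow, Finset.mul_sum]
  rw [h, Real.sqrt_mul (sq_nonneg c), Real.sqrt_sq_eq_abs]

/-- Cauchy-Schwarz for the dot product. -/
lemma dot_le_enorm' {α : Type*} [Fintype α] (v w : α → ℝ) :
    v ⬝ᵥ w ≤ enorm' v * enorm' w := by
  have h2 : (v ⬝ᵥ w) ^ 2 ≤ (enorm' v * enorm' w) ^ 2 := by
    rw [mul_pow, enorm'_sq, enorm'_sq]
    simpa [dotProduct] using Finset.sum_mul_sq_le_sq_mul_sq Finset.univ v w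
  calc v ⬝ᵥ w ≤ |v ⬝ᵥ w| := le_abs_self _
    _ = Real.sqrt ((v ⬝ᵥ w) ^ 2) := (Real.sqrt_sq_eq_abs _).symm
    _ ≤ Real.sqrt ((enorm' v * enorm' w) ^ 2) := Real.sqrt_le_sqrt h2
    _ = enorm' v * enorm' w :=
        Real.sqrt_sq (mul_nonneg (enorm'_nonneg v) (enorm'_nonneg w))

lemma sMin'_nonneg {α β : Type*} [Fintype α] [Fintype β] (M : Matrix α β ℝ) :
    0 ≤ sMin' M :=
  Real.iInf_nonneg fun _ => enorm'_nonneg _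

/-- Isometry: matrices with orthonormal columns preserve the norm. -/
lemma enorm'_ortho_mulVec {α β : Type*} [Fintype α] [Fintype β] [DecidableEq β]
    (Q : Matrix α β ℝ) (hQ : Qᵀ * Q = 1) (w : β → ℝ) :
    enorm' (Q.mulVec w) = enorm' w := by
  rw [enorm'_eq_sqrt_dot, enorm'_eq_sqrt_dot]
  congr 1
  rw [dotProduct_mulVec, ← mulVec_transpose, mulVec_mulVec, hQ, one_mulVec]

/-- Contraction: ‖Qᵀ v‖ ≤ ‖v‖ when QᵀQ = 1. -/
lemma enorm'_transpose_mulVec_le {α β : Type*} [Fintype α] [Fintype β] [DecidableEq β]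
    (Q : Matrix α β ℝ) (hQ : Qᵀ * Q = 1) (v : α → ℝ) :
    enorm' (Qᵀ.mulVec v) ≤ enorm' v := by
  set w := Qᵀ.mulVec v with hw
  have key : enorm' w ^ 2 ≤ enorm' v * enorm' w := by
    have h1 : enorm' w ^ 2 = v ⬝ᵥ Q.mulVec w := by
      rw [enorm'_sq]
      have : ∑ i, w i ^ 2 = w ⬝ᵥ w := by simp [dotProduct, sq]
      rw [this, hw, dotProduct_mulVec, ← mulVec_transpose, transpose_transpose,
        dotProduct_comm]
    have h2 : v ⬝ᵥ Q.mulVec w ≤ enorm' v * enorm' (Q.mulVec w) := dot_le_enorm' _ _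
    rw [enorm'_ortho_mulVec Q hQ w] at h2
    linarith [h1 ▸ h2]
  rcases eq_or_lt_of_le (enorm'_nonneg w) with h | h
  · rw [← h]; exact enorm'_nonneg v
  · nlinarith

/-- Frobenius bound: ‖Mv‖ ≤ ‖M‖_F ‖v‖. -/
lemma enorm'_mulVec_le_frob {α β : Type*} [Fintype α] [Fintype β]
    (M : Matrix α β ℝ) (v : β → ℝ) :
    enorm' (M.mulVec v) ≤ Real.sqrt (∑ i, ∑ j, M i j ^ 2) * enorm' v := by
  have key : ∑ i, (M.mulVec v) i ^ 2 ≤ (∑ i, ∑ j, M i j ^ 2) * ∑ j, v j ^ 2 := by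
    rw [Finset.sum_mul]
    apply Finset.sum_le_sum
    intro i _
    simpa [mulVec, dotProduct] using
      Finset.sum_mul_sq_le_sq_mul_sq Finset.univ (fun j => M i j) v
  calc enorm' (M.mulVec v) = Real.sqrt (∑ i, (M.mulVec v) i ^ 2) := rfl
    _ ≤ Real.sqrt ((∑ i, ∑ j, M i j ^ 2) * ∑ j, v j ^ 2) := Real.sqrt_le_sqrt key
    _ = Real.sqrt (∑ i, ∑ j, M i j ^ 2) * enorm' v := by
        rw [Real.sqrt_mul (by positivity)]; rfl

lemma bddAbove_unit {α β : Type*} [Fintype α] [Fintype β] (M : Matrix α β ℝ) :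
    BddAbove (Set.range fun x : {x : β → ℝ // enorm' x = 1} => enorm' (M.mulVec x)) := by
  refine ⟨Real.sqrt (∑ i, ∑ j, M i j ^ 2), ?_⟩
  rintro _ ⟨⟨x, hx⟩, rfl⟩
  simpa [hx] using enorm'_mulVec_le_frob M x

lemma le_opNorm' {α β : Type*} [Fintype α] [Fintype β]
    (M : Matrix α β ℝ) (x : β → ℝ) (hx : enorm' x = 1) :
    enorm' (M.mulVec x) ≤ opNorm' M :=
  le_ciSup (bddAbove_unit M) (⟨x, hx⟩ : {x : β → ℝ // enorm' x = 1})

lemma opNorm'_nonneg {α β : Type*} [Fintype α] [Fintype β] (M : Matrix α β ℝ) :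
    0 ≤ opNorm' M := by
  unfold opNorm'
  rcases isEmpty_or_nonempty {x : β → ℝ // enorm' x = 1} with h | h
  · rw [iSup_of_empty']
    exact le_of_eq Real.sSup_empty.symm
  · exact le_ciSup_of_le (bddAbove_unit M) (Classical.arbitrary _) (enorm'_nonneg _)

/-- σ_min bound: σ_min(M) ‖v‖ ≤ ‖Mv‖. -/
lemma sMin'_mul_le {α β : Type*} [Fintype α] [Fintype β]
    (M : Matrix α β ℝ) (v : β → ℝ) :
    sMin' M * enorm' v ≤ enorm' (M.mulVec v) := by
  rcases eq_or_lt_of_le (enorm'_nonneg v) with h | h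
  · rw [← h, mul_zero]; exact enorm'_nonneg _
  · set c := enorm' v with hc
    have hu : enorm' (c⁻¹ • v) = 1 := by
      rw [enorm'_smul, abs_of_pos (inv_pos.mpr h), inv_mul_cancel₀ h.ne']
    have h1 : sMin' M ≤ enorm' (M.mulVec (c⁻¹ • v)) :=
      ciInf_le ⟨0, by rintro _ ⟨y, rfl⟩; exact enorm'_nonneg _⟩
        (⟨c⁻¹ • v, hu⟩ : {x : β → ℝ // enorm' x = 1})
    rw [M.mulVec_smul, enorm'_smul, abs_of_pos (inv_pos.mpr h)] at h1
    calc sMin' M * c ≤ c⁻¹ * enorm' (M.mulVec v) * c :=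
          mul_le_mul_of_nonneg_right h1 h.le
      _ = enorm' (M.mulVec v) := by field_simp

/-- Norm bound for B* = R⁻¹QᵀA: ‖B*‖₂ ≤ ‖A‖₂ / (σ_min(A) σ_min(Ω)). -/
theorem bstar_norm_bound (n d k : ℕ)
    (A : Matrix (Fin n) (Fin d) ℝ) (Ω : Matrix (Fin d) (Fin k) ℝ)
    (Q : Matrix (Fin n) (Fin k) ℝ) (R : Matrix (Fin k) (Fin k) ℝ)
    (hQR : A * Ω = Q * R) (hQ : Qᵀ * Q = 1) (hR : IsUnit R.det)
    (hA : 0 < sMin' A) (hΩ : 0 < sMin' Ω) :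
    opNorm' (R⁻¹ * (Qᵀ * A)) ≤ opNorm' A / (sMin' A * sMin' Ω) := by
  have hσ : 0 < sMin' A * sMin' Ω := mul_pos hA hΩ
  apply Real.iSup_le _ (div_nonneg (opNorm'_nonneg A) hσ.le)
  rintro ⟨x, hx⟩
  set y := (R⁻¹ * (Qᵀ * A)).mulVec x with hy
  have hRy : R.mulVec y = (Qᵀ * A).mulVec x := by
    rw [hy, mulVec_mulVec, ← Matrix.mul_assoc, Matrix.mul_nonsing_inv _ hR, Matrix.one_mul]
  have h1 : sMin' A * sMin' Ω * enorm' y ≤ enorm' (R.mulVec y) := by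
    have e1 : enorm' (R.mulVec y) = enorm' (A.mulVec (Ω.mulVec y)) := by
      rw [← enorm'_ortho_mulVec Q hQ (R.mulVec y), mulVec_mulVec, ← hQR, ← mulVec_mulVec]
    rw [e1]
    calc sMin' A * sMin' Ω * enorm' y = sMin' A * (sMin' Ω * enorm' y) := by ring
      _ ≤ sMin' A * enorm' (Ω.mulVec y) :=
          mul_le_mul_of_nonneg_left (sMin'_mul_le Ω y) hA.le
      _ ≤ enorm' (A.mulVec (Ω.mulVec y)) := sMin'_mul_le A _
  have h2 : enorm' (R.mulVec y) ≤ opNorm' A := by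
    rw [hRy, ← mulVec_mulVec]
    exact le_trans (enorm'_transpose_mulVec_le Q hQ _) (le_opNorm' A x hx)
  have hfin : enorm' y ≤ opNorm' A / (sMin' A * sMin' Ω) := by
    rw [le_div_iff₀ hσ]
    calc enorm' y * (sMin' A * sMin' Ω) = sMin' A * sMin' Ω * enorm' y := by ring
      _ ≤ _ := le_trans h1 h2
  exact hfin
end

section
/- Monotonicity in the filter ratio: in the bilevel setting with constraint r/(1+θ₀χ(a)²) + (m−r)/(1+θ₀χ(b)²) = m−k and r < k, as the ratio χ(a)²/χ(b)² → ∞ the resulting error Θ̃ = ra²/(1+θ₀χ(a)²) + (m−r)b²/(1+θ₀χ(b)²) tends to (m−k)b², matching the Eckart–Young lower bound for rank-k approximation of the bilevel matrix. -/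
open Filter

/-- Monotonicity in the filter ratio: as χ(a)²/χ(b)² → ∞ (with the constraint defining
θ₀ holding along the sequence and r < k), the filtered bilevel error tends to (m−k)b²,
which equals the Eckart–Young optimal rank-k error ∑_{j>k} σ_j². -/
theorem filter_ratio_limit (m r k : ℕ) (hrk : r < k) (hkm : k < m)
    (a b : ℝ) (hb : 0 < b) (hab : b < a)
    (ca cb θ₀ : ℕ → ℝ) (hca : ∀ n, 0 < ca n) (hcb : ∀ n, 0 < cb n)
    (hθ : ∀ n, 0 < θ₀ n)
    (hcon : ∀ n, (r : ℝ) / (1 + θ₀ n * (ca n) ^ 2)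
        + ((m : ℝ) - r) / (1 + θ₀ n * (cb n) ^ 2) = (m : ℝ) - k)
    (hratio : Tendsto (fun n => (ca n) ^ 2 / (cb n) ^ 2) atTop atTop) :
    Tendsto (fun n => (r : ℝ) * a ^ 2 / (1 + θ₀ n * (ca n) ^ 2)
        + ((m : ℝ) - r) * b ^ 2 / (1 + θ₀ n * (cb n) ^ 2))
      atTop (nhds (((m : ℝ) - k) * b ^ 2)) ∧
    ((m : ℝ) - k) * b ^ 2 =
      ∑ j ∈ Finset.univ.filter (fun j : Fin m => k ≤ (j : ℕ)),
        (if (j : ℕ) < r then a else b) ^ 2 := by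
  have hmk : (0 : ℝ) < (m : ℝ) - k := by
    have : (k : ℝ) < m := by exact_mod_cast hkm
    linarith
  have hkr : (0 : ℝ) < (k : ℝ) - r := by
    have : (r : ℝ) < k := by exact_mod_cast hrk
    linarith
  set c : ℝ := ((k : ℝ) - r) / ((m : ℝ) - k) with hc
  have hcpos : 0 < c := div_pos hkr hmk
  -- positivity of denominators
  have hDa : ∀ n, (0 : ℝ) < 1 + θ₀ n * (ca n) ^ 2 := fun n => by
    have := mul_pos (hθ n) (pow_pos (hca n) 2); linarith
  have hDb : ∀ n, (0 : ℝ) < 1 + θ₀ n * (cb n) ^ 2 := fun n => by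
    have := mul_pos (hθ n) (pow_pos (hcb n) 2); linarith
  set f : ℕ → ℝ := fun n => (r : ℝ) / (1 + θ₀ n * (ca n) ^ 2) with hf
  -- lower bound on θ₀ cb²
  have hlb : ∀ n, c ≤ θ₀ n * (cb n) ^ 2 := by
    intro n
    have h1 : ((m : ℝ) - r) / (1 + θ₀ n * (cb n) ^ 2) ≤ (m : ℝ) - k := by
      have : (0 : ℝ) ≤ (r : ℝ) / (1 + θ₀ n * (ca n) ^ 2) :=
        div_nonneg (Nat.cast_nonneg r) (hDa n).le
      linarith [hcon n]
    have h2 : (m : ℝ) - r ≤ ((m : ℝ) - k) * (1 + θ₀ n * (cb n) ^ 2) :=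
      (div_le_iff₀ (hDb n)).mp h1
    rw [hc, div_le_iff₀ hmk]
    nlinarith
  -- f → 0
  have hf0 : Tendsto f atTop (nhds 0) := by
    have hg : Tendsto (fun n => (r : ℝ) / (1 + c * ((ca n) ^ 2 / (cb n) ^ 2)))
        atTop (nhds 0) := by
      apply Tendsto.div_atTop (tendsto_const_nhds)
      exact tendsto_atTop_add_const_left _ 1 (hratio.const_mul_atTop hcpos)
    apply tendsto_of_tendsto_of_tendsto_of_le_of_le
      (tendsto_const_nhds : Tendsto (fun _ : ℕ => (0:ℝ)) atTop (nhds 0)) hg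
    · intro n; exact div_nonneg (Nat.cast_nonneg r) (hDa n).le
    · intro n
      have hcb2 : (0 : ℝ) < (cb n) ^ 2 := pow_pos (hcb n) 2
      have hratnn : (0 : ℝ) ≤ (ca n) ^ 2 / (cb n) ^ 2 :=
        div_nonneg (sq_nonneg _) hcb2.le
      have heq : θ₀ n * (ca n) ^ 2 = (θ₀ n * (cb n) ^ 2) * ((ca n) ^ 2 / (cb n) ^ 2) := by
        rw [mul_assoc, mul_div_assoc', mul_comm ((cb n) ^ 2), mul_div_assoc, div_self hcb2.ne', mul_one]
      have hle : c * ((ca n) ^ 2 / (cb n) ^ 2) ≤ θ₀ n * (ca n) ^ 2 := by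
        rw [heq]
        exact mul_le_mul_of_nonneg_right (hlb n) hratnn
      have hden : (0 : ℝ) < 1 + c * ((ca n) ^ 2 / (cb n) ^ 2) := by
        have := mul_nonneg hcpos.le hratnn; linarith
      exact div_le_div_of_nonneg_left (Nat.cast_nonneg r) hden (by linarith)
  constructor
  · have hrw : ∀ n, (r : ℝ) * a ^ 2 / (1 + θ₀ n * (ca n) ^ 2)
        + ((m : ℝ) - r) * b ^ 2 / (1 + θ₀ n * (cb n) ^ 2)
        = a ^ 2 * f n + b ^ 2 * (((m : ℝ) - k) - f n) := by
      intro n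
      have h := hcon n
      have : ((m : ℝ) - r) / (1 + θ₀ n * (cb n) ^ 2) = ((m : ℝ) - k) - f n := by
        rw [hf]; linarith
      calc (r : ℝ) * a ^ 2 / (1 + θ₀ n * (ca n) ^ 2)
            + ((m : ℝ) - r) * b ^ 2 / (1 + θ₀ n * (cb n) ^ 2)
          = a ^ 2 * ((r : ℝ) / (1 + θ₀ n * (ca n) ^ 2))
            + b ^ 2 * (((m : ℝ) - r) / (1 + θ₀ n * (cb n) ^ 2)) := by ring
        _ = a ^ 2 * f n + b ^ 2 * (((m : ℝ) - k) - f n) := by rw [this, hf]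
    have h2 : Tendsto (fun n => a ^ 2 * f n + b ^ 2 * (((m : ℝ) - k) - f n))
        atTop (nhds (a ^ 2 * 0 + b ^ 2 * (((m : ℝ) - k) - 0))) :=
      (hf0.const_mul _).add ((tendsto_const_nhds.sub hf0).const_mul _)
    rw [show a ^ 2 * 0 + b ^ 2 * (((m : ℝ) - k) - 0) = ((m : ℝ) - k) * b ^ 2 by ring] at h2
    exact h2.congr (fun n => (hrw n).symm)
  · have hsum : ∀ j ∈ Finset.univ.filter (fun j : Fin m => k ≤ (j : ℕ)),
        (if (j : ℕ) < r then a else b) ^ 2 = b ^ 2 := by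
      intro j hj
      simp only [Finset.mem_filter] at hj
      rw [if_neg (by omega)]
    rw [Finset.sum_congr rfl hsum, Finset.sum_const, nsmul_eq_mul]
    congr 1
    have : (Finset.univ.filter (fun j : Fin m => k ≤ (j : ℕ))).card = m - k := by
      have hlt : ∀ x ∈ Finset.Ico k m, x < m := fun x hx => (Finset.mem_Ico.mp hx).2
      have he : Finset.univ.filter (fun j : Fin m => k ≤ (j : ℕ))
          = (Finset.Ico k m).attachFin hlt := by
        ext j
        simp [Finset.mem_attachFin, Finset.mem_Ico, j.isLt]
      rw [he, Finset.card_attachFin, Nat.card_Ico]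
    rw [this]
    have : k ≤ m := hkm.le
    push_cast [Nat.cast_sub this]
    ring
end
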